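/- arXiv:1601.00052 — 2 statements merged into one kernel-verified Lean document; each statement's English description precedes it below -/
import Mathlib

section
/- For a partition λ with at most n parts, ∏_{1≤i<j≤n} (q t^{j−i}; q)_{λ_i − λ_j} / (q t^{j−i−1}; q)_{λ_i − λ_j} = ∏_{s ∈ λ} (1 − q^{a'(s)+1} t^{n−1−l'(s)}) / (1 − q^{a(s)+1} t^{l(s)}), where for a cell s = (i, j) of λ, the arm a(s) = λ_i − j, the leg l(s) = λ'_j − i (λ' the conjugate partition), a'(s) = j − 1, and l'(s) = i − 1. -/
open Finset

noncomputable section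

/-- Finite q-Pochhammer symbol `(a; q)_m = ∏_{k=0}^{m-1} (1 - a q^k)`. -/
def qPoch (a q : ℂ) (m : ℕ) : ℂ := ∏ k ∈ Finset.range m, (1 - a * q ^ k)

/-- Column lengths of the conjugate partition: `λ'_{j+1}` for 0-based column `j`. -/
def conjPart (n : ℕ) (lam : Fin n → ℕ) (j : ℕ) : ℕ :=
  (Finset.univ.filter fun i : Fin n => j < lam i).card

namespace DPAL

/-- extension of `lam` to ℕ by 0 -/
def Lam (n : ℕ) (lam : Fin n → ℕ) (j : ℕ) : ℕ := if h : j < n then lam ⟨j, h⟩ else 0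

lemma Lam_anti {n : ℕ} {lam : Fin n → ℕ} (hpart : Antitone lam) : Antitone (Lam n lam) := by
  apply antitone_nat_of_succ_le
  intro k
  unfold Lam
  by_cases h1 : k + 1 < n
  · rw [dif_pos h1, dif_pos (by omega : k < n)]
    exact hpart (by simp [Fin.le_def])
  · rw [dif_neg h1]; exact Nat.zero_le _

lemma Lam_pos_lt {n : ℕ} {lam : Fin n → ℕ} {j : ℕ} (h : 0 < Lam n lam j) : j < n := by
  by_contra hc
  rw [Lam, dif_neg hc] at h; omega

lemma qPoch_eq (q t : ℂ) (m r : ℕ) :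
    qPoch (q * t ^ m) q r = ∏ k ∈ Finset.range r, (1 - q ^ (k + 1) * t ^ m) := by
  unfold qPoch
  refine Finset.prod_congr rfl fun k _ => ?_
  ring

/-- telescoping block lemma -/
lemma qPoch_block (q t : ℂ) (m a b L : ℕ) (hab : a ≤ b) (hbL : b ≤ L) :
    qPoch (q * t ^ m) q (L - b) * ∏ c ∈ Finset.Ico a b, (1 - q ^ (L - c) * t ^ m)
      = qPoch (q * t ^ m) q (L - a) := by
  rw [qPoch_eq, qPoch_eq,
    ← Finset.prod_range_mul_prod_Ico (fun k => (1 - q ^ (k + 1) * t ^ m)) (by omega : L - b ≤ L - a)]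
  congr 1
  refine Finset.prod_nbij' (fun c => L - 1 - c) (fun c => L - 1 - c) ?_ ?_ ?_ ?_ ?_
  · intro c hc; simp only [Finset.mem_Ico] at *; omega
  · intro c hc; simp only [Finset.mem_Ico] at *; omega
  · intro c hc; simp only [Finset.mem_Ico] at *; omega
  · intro c hc; simp only [Finset.mem_Ico] at *; omega
  · intro c hc; simp only [Finset.mem_Ico] at hc
    show _ = 1 - q ^ (L - 1 - c + 1) * t ^ m
    rw [show L - 1 - c + 1 = L - c from by omega]

/-- card of filter ≤ j -/
lemma card_le {n j : ℕ} (hj : j < n) :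
    (Finset.univ.filter fun k : Fin n => (k : ℕ) ≤ j).card = j + 1 := by
  rw [← Fintype.card_fin (j + 1)]
  rw [← Finset.card_univ]
  refine Finset.card_bij' (fun k hk => ⟨(k : ℕ), by simp at hk; omega⟩)
    (fun m _ => ⟨(m : ℕ), by omega⟩) ?_ ?_ ?_ ?_
  · intro a ha; simp
  · intro a ha; simp; omega
  · intro a ha; simp
  · intro a ha; simp

lemma conj_val {n : ℕ} {lam : Fin n → ℕ} (hpart : Antitone lam) {j c : ℕ}
    (hc : c < Lam n lam j) (hc' : Lam n lam (j + 1) ≤ c) :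
    conjPart n lam c = j + 1 := by
  have hj : j < n := Lam_pos_lt (lam := lam) (by omega)
  unfold conjPart
  rw [show (Finset.univ.filter fun k : Fin n => c < lam k)
      = (Finset.univ.filter fun k : Fin n => (k : ℕ) ≤ j) from ?_]
  · exact card_le hj
  · ext k
    simp only [Finset.mem_filter, Finset.mem_univ, true_and]
    constructor
    · intro h
      by_contra hk
      push_neg at hk
      have hj1 : j + 1 < n := by omega
      have : lam k ≤ Lam n lam (j + 1) := by
        rw [Lam, dif_pos hj1]
        exact hpart (by rw [Fin.le_def]; simp; omega)
      omega
    · intro h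
      have : Lam n lam j ≤ lam k := by
        rw [Lam, dif_pos hj]
        exact hpart (by rw [Fin.le_def]; simpa)
      omega

/-- partition range (g 0) into blocks -/
lemma block_prod (F : ℕ → ℂ) : ∀ (K : ℕ) (g : ℕ → ℕ), (∀ k, k < K → g (k + 1) ≤ g k) →
    g K = 0 →
    ∏ c ∈ Finset.range (g 0), F c = ∏ j ∈ Finset.range K, ∏ c ∈ Finset.Ico (g (j + 1)) (g j), F c := by
  intro K
  induction K with
  | zero => intro g _ h0; rw [h0]; simp
  | succ K ih =>
    intro g hg hK
    have h1 := ih (fun k => g (k + 1)) (fun k hk => hg (k + 1) (by omega)) hK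
    rw [Finset.prod_range_succ']
    rw [← h1, ← Finset.prod_range_mul_prod_Ico F (hg 0 (by omega))]


lemma qPoch_zero (a q : ℂ) : qPoch a q 0 = 1 := by simp [qPoch]

lemma row_identity {n : ℕ} {lam : Fin n → ℕ} (hpart : Antitone lam) (q t : ℂ) (i : Fin n) :
    (∏ c ∈ Finset.range (lam i),
        (1 - q ^ (lam i - c) * t ^ (conjPart n lam c - ((i : ℕ) + 1))))
      * ∏ k ∈ Finset.range (n - (i : ℕ) - 1),
          qPoch (q * t ^ (k + 1)) q (lam i - Lam n lam ((i : ℕ) + k + 1))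
    = qPoch (q * t ^ (n - 1 - (i : ℕ))) q (lam i)
      * ∏ k ∈ Finset.range (n - (i : ℕ) - 1),
          qPoch (q * t ^ k) q (lam i - Lam n lam ((i : ℕ) + k + 1)) := by
  have hin : (i : ℕ) < n := i.isLt
  set g : ℕ → ℕ := fun j => Lam n lam ((i : ℕ) + j) with hgdef
  have hganti : ∀ a b : ℕ, a ≤ b → g b ≤ g a := fun a b h => Lam_anti hpart (by omega)
  have hg0 : g 0 = lam i := by simp [hgdef, Lam, hin]
  have hgK : g (n - (i : ℕ)) = 0 := by
    simp only [hgdef, Lam]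
    rw [dif_neg (by omega)]
  have hgadd : ∀ k : ℕ, g (k + 1) = Lam n lam ((i : ℕ) + k + 1) := by
    intro k
    simp only [hgdef]
    rw [← Nat.add_assoc]
  -- Step A: block decomposition of the denominator product
  have hD : (∏ c ∈ Finset.range (lam i),
        (1 - q ^ (lam i - c) * t ^ (conjPart n lam c - ((i : ℕ) + 1))))
      = ∏ j ∈ Finset.range (n - (i : ℕ)),
          ∏ c ∈ Finset.Ico (g (j + 1)) (g j), (1 - q ^ (lam i - c) * t ^ j) := by
    rw [← hg0,
      block_prod _ (n - (i : ℕ)) g (fun k _ => hganti k (k + 1) (by omega)) hgK]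
    refine Finset.prod_congr rfl fun j hj => Finset.prod_congr rfl fun c hc => ?_
    simp only [Finset.mem_Ico] at hc
    have hcv : conjPart n lam c = (i : ℕ) + j + 1 :=
      conj_val hpart (j := (i : ℕ) + j) hc.2 (by rw [← hgadd j]; exact hc.1)
    rw [hcv, show (i : ℕ) + j + 1 - ((i : ℕ) + 1) = j from by omega]
  -- Step B: multiply by the Q-product and telescope
  have hB : (∏ c ∈ Finset.range (lam i),
        (1 - q ^ (lam i - c) * t ^ (conjPart n lam c - ((i : ℕ) + 1))))
      * ∏ j ∈ Finset.range (n - (i : ℕ)), qPoch (q * t ^ j) q (lam i - g j)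
      = ∏ j ∈ Finset.range (n - (i : ℕ)), qPoch (q * t ^ j) q (lam i - g (j + 1)) := by
    rw [hD, ← Finset.prod_mul_distrib]
    refine Finset.prod_congr rfl fun j hj => ?_
    rw [mul_comm]
    exact qPoch_block q t j (g (j + 1)) (g j) (lam i) (hganti j (j + 1) (by omega))
      (by rw [← hg0]; exact hganti 0 j (by omega))
  have hm : n - (i : ℕ) = (n - (i : ℕ) - 1) + 1 := by omega
  have hQ : ∏ j ∈ Finset.range (n - (i : ℕ)), qPoch (q * t ^ j) q (lam i - g j)
      = ∏ k ∈ Finset.range (n - (i : ℕ) - 1),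
          qPoch (q * t ^ (k + 1)) q (lam i - Lam n lam ((i : ℕ) + k + 1)) := by
    rw [hm, Finset.prod_range_succ']
    have h0 : qPoch (q * t ^ 0) q (lam i - g 0) = 1 := by
      rw [hg0, Nat.sub_self, qPoch_zero]
    rw [h0, mul_one]
    exact Finset.prod_congr rfl fun k _ => by rw [hgadd k]
  have hR : ∏ j ∈ Finset.range (n - (i : ℕ)), qPoch (q * t ^ j) q (lam i - g (j + 1))
      = (∏ k ∈ Finset.range (n - (i : ℕ) - 1),
          qPoch (q * t ^ k) q (lam i - Lam n lam ((i : ℕ) + k + 1)))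
        * qPoch (q * t ^ (n - 1 - (i : ℕ))) q (lam i) := by
    rw [hm, Nat.add_sub_cancel, Finset.prod_range_succ]
    have h1 : ∏ k ∈ Finset.range (n - (i : ℕ) - 1), qPoch (q * t ^ k) q (lam i - g (k + 1))
        = ∏ k ∈ Finset.range (n - (i : ℕ) - 1),
            qPoch (q * t ^ k) q (lam i - Lam n lam ((i : ℕ) + k + 1)) :=
      Finset.prod_congr rfl fun k _ => by rw [hgadd k]
    have h2 : qPoch (q * t ^ (n - (i : ℕ) - 1)) q (lam i - g (n - (i : ℕ) - 1 + 1))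
        = qPoch (q * t ^ (n - 1 - (i : ℕ))) q (lam i) := by
      rw [show (n - (i : ℕ) - 1) + 1 = n - (i : ℕ) from by omega, hgK, Nat.sub_zero,
        show n - (i : ℕ) - 1 = n - 1 - (i : ℕ) from by omega]
    rw [h1, h2]
  rw [← hQ, hB, hR]
  exact mul_comm _ _


lemma reidx {n : ℕ} (i : Fin n) (G : ℕ → ℂ) :
    (∏ j : Fin n, (if i < j then G (j : ℕ) else 1))
      = ∏ k ∈ Finset.range (n - (i : ℕ) - 1), G ((i : ℕ) + k + 1) := by
  rw [← Finset.prod_filter]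
  refine Finset.prod_nbij' (fun j : Fin n => (j : ℕ) - (i : ℕ) - 1)
    (fun k => if h : (i : ℕ) + k + 1 < n then (⟨(i : ℕ) + k + 1, h⟩ : Fin n) else i)
    ?_ ?_ ?_ ?_ ?_
  · intro j hj
    simp only [Finset.mem_filter, Finset.mem_univ, true_and, Fin.lt_def] at hj
    simp only [Finset.mem_range]
    omega
  · intro k hk
    simp only [Finset.mem_range] at hk
    beta_reduce
    rw [dif_pos (by omega : (i : ℕ) + k + 1 < n)]
    simp only [Finset.mem_filter, Finset.mem_univ, true_and, Fin.lt_def, Fin.val_mk]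
    omega
  · intro j hj
    simp only [Finset.mem_filter, Finset.mem_univ, true_and, Fin.lt_def] at hj
    beta_reduce
    rw [dif_pos (by omega : (i : ℕ) + ((j : ℕ) - (i : ℕ) - 1) + 1 < n)]
    exact Fin.ext (by simp only [Fin.val_mk]; omega)
  · intro k hk
    simp only [Finset.mem_range] at hk
    beta_reduce
    rw [dif_pos (by omega : (i : ℕ) + k + 1 < n)]
    simp only [Fin.val_mk]
    omega
  · intro j hj
    simp only [Finset.mem_filter, Finset.mem_univ, true_and, Fin.lt_def] at hj
    beta_reduce
    congr 1
    omega

end DPAL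

open DPAL

/-- `∏_{1≤i<j≤n} (q t^{j-i}; q)_{λ_i-λ_j} / (q t^{j-i-1}; q)_{λ_i-λ_j}
 = ∏_{s∈λ} (1 - q^{a'(s)+1} t^{n-1-l'(s)}) / (1 - q^{a(s)+1} t^{l(s)})`.
Cells are `(i, j)` with 0-based coordinates; `a(s)+1 = λ_i - j`, `l(s) = λ'_{j+1} - (i+1)`,
`a'(s) = j`, `l'(s) = i`. -/
theorem double_product_arm_leg (n : ℕ) (lam : Fin n → ℕ) (hpart : Antitone lam)
    (q t : ℂ)
    (hden : ∀ (i : Fin n) (j : ℕ), j < lam i →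
      1 - q ^ (lam i - j) * t ^ (conjPart n lam j - ((i : ℕ) + 1)) ≠ 0)
    (hden' : ∀ p : Fin n × Fin n, p.1 < p.2 →
      qPoch (q * t ^ ((p.2 : ℕ) - (p.1 : ℕ) - 1)) q (lam p.1 - lam p.2) ≠ 0) :
    (∏ p ∈ Finset.univ.filter (fun p : Fin n × Fin n => p.1 < p.2),
        qPoch (q * t ^ ((p.2 : ℕ) - (p.1 : ℕ))) q (lam p.1 - lam p.2) /
          qPoch (q * t ^ ((p.2 : ℕ) - (p.1 : ℕ) - 1)) q (lam p.1 - lam p.2)) =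
      ∏ i : Fin n, ∏ j ∈ Finset.range (lam i),
        (1 - q ^ (j + 1) * t ^ (n - 1 - (i : ℕ))) /
          (1 - q ^ (lam i - j) * t ^ (conjPart n lam j - ((i : ℕ) + 1))) := by
  have hLam : ∀ (j : Fin n), Lam n lam (j : ℕ) = lam j := by
    intro j
    rw [Lam, dif_pos j.isLt]
  -- per-row identity in quotient form
  have key : ∀ i : Fin n,
      (∏ j ∈ Finset.range (lam i),
        (1 - q ^ (j + 1) * t ^ (n - 1 - (i : ℕ))) /
          (1 - q ^ (lam i - j) * t ^ (conjPart n lam j - ((i : ℕ) + 1))))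
      = ∏ k ∈ Finset.range (n - (i : ℕ) - 1),
          (qPoch (q * t ^ (k + 1)) q (lam i - Lam n lam ((i : ℕ) + k + 1)) /
            qPoch (q * t ^ k) q (lam i - Lam n lam ((i : ℕ) + k + 1))) := by
    intro i
    rw [Finset.prod_div_distrib, Finset.prod_div_distrib, ← qPoch_eq]
    have hD : (∏ c ∈ Finset.range (lam i),
        (1 - q ^ (lam i - c) * t ^ (conjPart n lam c - ((i : ℕ) + 1)))) ≠ 0 :=
      Finset.prod_ne_zero_iff.mpr fun c hc => hden i c (Finset.mem_range.mp hc)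
    have hP0 : (∏ k ∈ Finset.range (n - (i : ℕ) - 1),
        qPoch (q * t ^ k) q (lam i - Lam n lam ((i : ℕ) + k + 1))) ≠ 0 := by
      refine Finset.prod_ne_zero_iff.mpr fun k hk => ?_
      have hk' := Finset.mem_range.mp hk
      have h2 : (i : ℕ) + k + 1 < n := by omega
      have h3 := hden' (i, ⟨(i : ℕ) + k + 1, h2⟩) (by
        show (i : Fin n) < ⟨(i : ℕ) + k + 1, h2⟩
        rw [Fin.lt_def]
        show (i : ℕ) < (i : ℕ) + k + 1
        omega)
      simp only at h3
      rw [show ((i : ℕ) + k + 1) - (i : ℕ) - 1 = k from by omega] at h3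
      rw [show Lam n lam ((i : ℕ) + k + 1) = lam ⟨(i : ℕ) + k + 1, h2⟩ from by
        rw [Lam, dif_pos h2]]
      exact h3
    rw [div_eq_div_iff hD hP0]
    linear_combination - row_identity hpart q t i
  -- reindex the left-hand side
  calc (∏ p ∈ Finset.univ.filter (fun p : Fin n × Fin n => p.1 < p.2),
        qPoch (q * t ^ ((p.2 : ℕ) - (p.1 : ℕ))) q (lam p.1 - lam p.2) /
          qPoch (q * t ^ ((p.2 : ℕ) - (p.1 : ℕ) - 1)) q (lam p.1 - lam p.2))
      = ∏ i : Fin n, ∏ j : Fin n,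
          (if i < j then
            (fun m : ℕ => qPoch (q * t ^ (m - (i : ℕ))) q (lam i - Lam n lam m) /
              qPoch (q * t ^ (m - (i : ℕ) - 1)) q (lam i - Lam n lam m)) (j : ℕ)
          else 1) := by
        rw [Finset.prod_filter, Fintype.prod_prod_type]
        refine Finset.prod_congr rfl fun i _ => Finset.prod_congr rfl fun j _ => ?_
        by_cases h : i < j
        · simp only [if_pos h, hLam]
        · simp only [if_neg h]
    _ = ∏ i : Fin n, ∏ k ∈ Finset.range (n - (i : ℕ) - 1),
          (qPoch (q * t ^ (k + 1)) q (lam i - Lam n lam ((i : ℕ) + k + 1)) /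
            qPoch (q * t ^ k) q (lam i - Lam n lam ((i : ℕ) + k + 1))) := by
        refine Finset.prod_congr rfl fun i _ => ?_
        refine (reidx i (fun m : ℕ =>
            qPoch (q * t ^ (m - (i : ℕ))) q (lam i - Lam n lam m) /
              qPoch (q * t ^ (m - (i : ℕ) - 1)) q (lam i - Lam n lam m))).trans ?_
        refine Finset.prod_congr rfl fun k _ => ?_
        show qPoch (q * t ^ (((i : ℕ) + k + 1) - (i : ℕ))) q (lam i - Lam n lam ((i : ℕ) + k + 1)) /
            qPoch (q * t ^ (((i : ℕ) + k + 1) - (i : ℕ) - 1)) q (lam i - Lam n lam ((i : ℕ) + k + 1)) = _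
        rw [show ((i : ℕ) + k + 1) - (i : ℕ) - 1 = k from by omega,
          show ((i : ℕ) + k + 1) - (i : ℕ) = k + 1 from by omega]
    _ = ∏ i : Fin n, ∏ j ∈ Finset.range (lam i),
        (1 - q ^ (j + 1) * t ^ (n - 1 - (i : ℕ))) /
          (1 - q ^ (lam i - j) * t ^ (conjPart n lam j - ((i : ℕ) + 1))) :=
        Finset.prod_congr rfl fun i _ => (key i).symm


end
end

section
/- For a partition λ with at most n parts, ∏_{1≤i<j≤n} (t^{j−i}; q)_{λ_i − λ_j} / (t^{j−i+1}; q)_{λ_i − λ_j} = ∏_{s ∈ λ} (1 − q^{a(s)} t^{l(s)+1}) / (1 − q^{a'(s)} t^{n − l'(s)}), where a(s), l(s), a'(s), l'(s) denote the arm, leg, arm colength, and leg colength of the cell s in λ. -/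
open Finset

noncomputable section

lemma qPoch_split (a q : ℂ) {m' m : ℕ} (h : m' ≤ m) :
    qPoch a q m = qPoch a q m' * ∏ k ∈ Finset.Ico m' m, (1 - a * q ^ k) := by
  unfold qPoch
  rw [Finset.range_eq_Ico,
    ← Finset.prod_Ico_consecutive _ (Nat.zero_le m') h, ← Finset.range_eq_Ico]

lemma card_filter_val_lt (m c : ℕ) :
    (Finset.univ.filter fun i : Fin m => (i : ℕ) < c).card = min c m := by
  rw [Finset.card_filter, Fin.sum_univ_eq_sum_range (fun i => if i < c then 1 else 0) m,
    ← Finset.card_filter]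
  have : Finset.filter (fun i => i < c) (Finset.range m) = Finset.range (min c m) := by
    ext x; simp [Nat.lt_min, and_comm]
  rw [this, Finset.card_range]

lemma conjPart_eq (m : ℕ) (lam : Fin m → ℕ) (hpart : Antitone lam) (r : ℕ) (hr : r < m)
    (j : ℕ) (h1 : j < lam ⟨r, hr⟩) (h2 : ∀ h : r + 1 < m, lam ⟨r + 1, h⟩ ≤ j) :
    conjPart m lam j = r + 1 := by
  unfold conjPart
  have key : (Finset.univ.filter fun i : Fin m => j < lam i)
      = Finset.univ.filter fun i : Fin m => (i : ℕ) < r + 1 := by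
    ext i
    simp only [Finset.mem_filter, Finset.mem_univ, true_and]
    constructor
    · intro hj
      by_contra hc
      push_neg at hc
      have hrm : r + 1 < m := lt_of_le_of_lt hc i.isLt
      have hle : lam i ≤ lam ⟨r + 1, hrm⟩ := hpart (by exact hc)
      have := le_trans hle (h2 hrm)
      omega
    · intro hi
      have : lam ⟨r, hr⟩ ≤ lam i := hpart (by exact Nat.lt_succ_iff.mp hi)
      omega
  rw [key, card_filter_val_lt]
  omega

lemma conjPart_succ (n : ℕ) (lam : Fin (n + 1) → ℕ) (j : ℕ) (h : j < lam 0) :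
    conjPart (n + 1) lam j = conjPart n (fun i => lam i.succ) j + 1 := by
  unfold conjPart
  rw [Finset.card_filter, Finset.card_filter, Fin.sum_univ_succ]
  simp [h, add_comm]

lemma prod_Ico_merge (g : ℕ → ℂ) (a : ℕ → ℕ) (ha : Monotone a) (m : ℕ) :
    ∏ r ∈ Finset.range m, ∏ k ∈ Finset.Ico (a r) (a (r + 1)), g k
      = ∏ k ∈ Finset.Ico (a 0) (a m), g k := by
  induction m with
  | zero => simp
  | succ m ih =>
      rw [Finset.prod_range_succ, ih,
        Finset.prod_Ico_consecutive _ (ha (Nat.zero_le m)) (ha (Nat.le_succ m))]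

lemma pairsplit (n : ℕ) (f : Fin (n + 1) → Fin (n + 1) → ℂ) :
    (∏ i : Fin (n + 1), ∏ j : Fin (n + 1), if i < j then f i j else 1)
      = (∏ j : Fin n, f 0 j.succ)
        * ∏ i : Fin n, ∏ j : Fin n, if i < j then f i.succ j.succ else 1 := by
  rw [Fin.prod_univ_succ]
  congr 1
  · rw [Fin.prod_univ_succ]
    simp [Fin.succ_pos]
  · apply Finset.prod_congr rfl
    intro i _
    rw [Fin.prod_univ_succ]
    simp [Fin.succ_lt_succ_iff]

lemma prod_filter_pairs (n : ℕ) (f : Fin n × Fin n → ℂ) :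
    ∏ p ∈ Finset.univ.filter (fun p : Fin n × Fin n => p.1 < p.2), f p
      = ∏ i : Fin n, ∏ j : Fin n, if i < j then f (i, j) else 1 := by
  rw [Finset.prod_filter, Fintype.prod_prod_type]

lemma row_lemma (n : ℕ) (lam : Fin (n + 1) → ℕ) (hpart : Antitone lam) (q t : ℂ) :
    (∏ j ∈ Finset.range (lam 0), (1 - q ^ j * t ^ (n + 1))) *
      (∏ j : Fin n, qPoch (t ^ ((j : ℕ) + 1)) q (lam 0 - lam j.succ)) =
    (∏ j ∈ Finset.range (lam 0),
        (1 - q ^ (lam 0 - 1 - j) * t ^ (conjPart (n + 1) lam j))) *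
      (∏ j : Fin n, qPoch (t ^ ((j : ℕ) + 1 + 1)) q (lam 0 - lam j.succ)) := by
  set lamN : ℕ → ℕ := fun r => if h : r < n + 1 then lam ⟨r, h⟩ else 0 with hlamN
  set a : ℕ → ℕ := fun r => lam 0 - lamN r with haa
  have hanti : ∀ r s : ℕ, r ≤ s → lamN s ≤ lamN r := by
    intro r s hrs
    by_cases hs : s < n + 1
    · have hr : r < n + 1 := lt_of_le_of_lt hrs hs
      simp only [hlamN, dif_pos hs, dif_pos hr]
      exact hpart (by exact hrs)
    · simp only [hlamN, dif_neg hs]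
      exact Nat.zero_le _
  have ha : Monotone a := fun r s hrs => Nat.sub_le_sub_left (hanti r s hrs) _
  have ha0 : a 0 = 0 := by
    have : lamN 0 = lam 0 := by
      simp only [hlamN, dif_pos (Nat.succ_pos n)]
      congr 1
    simp [haa, this]
  have haN : a (n + 1) = lam 0 := by
    simp [haa, hlamN]
  have hsucc : ∀ j : Fin n, a ((j : ℕ) + 1) = lam 0 - lam j.succ := by
    intro j
    have hj : (j : ℕ) + 1 < n + 1 := Nat.succ_lt_succ j.isLt
    simp only [haa, hlamN, dif_pos hj]
    congr 2
  have main : (∏ r ∈ Finset.range (n + 1), qPoch (t ^ (r + 1)) q (a (r + 1)))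
      = (∏ r ∈ Finset.range (n + 1), qPoch (t ^ (r + 1)) q (a r)) *
        ∏ j ∈ Finset.range (lam 0),
          (1 - q ^ (lam 0 - 1 - j) * t ^ (conjPart (n + 1) lam j)) := by
    have step1 : ∀ r ∈ Finset.range (n + 1), qPoch (t ^ (r + 1)) q (a (r + 1)) =
        qPoch (t ^ (r + 1)) q (a r) *
          ∏ k ∈ Finset.Ico (a r) (a (r + 1)), (1 - t ^ (r + 1) * q ^ k) :=
      fun r _ => qPoch_split _ _ (ha (Nat.le_succ r))
    rw [Finset.prod_congr rfl step1, Finset.prod_mul_distrib]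
    congr 1
    have step2 : ∀ r ∈ Finset.range (n + 1),
        (∏ k ∈ Finset.Ico (a r) (a (r + 1)), (1 - t ^ (r + 1) * q ^ k))
          = ∏ k ∈ Finset.Ico (a r) (a (r + 1)),
              (1 - q ^ k * t ^ (conjPart (n + 1) lam (lam 0 - 1 - k))) := by
      intro r hr
      apply Finset.prod_congr rfl
      intro k hk
      rw [Finset.mem_Ico] at hk
      rw [Finset.mem_range] at hr
      have hcp : conjPart (n + 1) lam (lam 0 - 1 - k) = r + 1 := by
        apply conjPart_eq (n + 1) lam hpart r hr
        · have h1 : a r ≤ k := hk.1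
          have h2 : k < a (r + 1) := hk.2
          have h4 : lamN r = lam ⟨r, hr⟩ := by simp only [hlamN, dif_pos hr]
          have h5 : a (r + 1) ≤ lam 0 := Nat.sub_le _ _
          simp only [haa] at h1 h2
          rw [h4] at h1
          omega
        · intro h
          have h2 : k < a (r + 1) := hk.2
          have h4 : lamN (r + 1) = lam ⟨r + 1, h⟩ := by simp only [hlamN, dif_pos h]
          simp only [haa] at h2
          rw [h4] at h2
          omega
      rw [hcp, mul_comm (t ^ (r + 1)) (q ^ k)]
    rw [Finset.prod_congr rfl step2, prod_Ico_merge _ a ha (n + 1), ha0, haN,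
      ← Finset.range_eq_Ico,
      ← Finset.prod_range_reflect
        (fun j => 1 - q ^ (lam 0 - 1 - j) * t ^ conjPart (n + 1) lam j) (lam 0)]
    apply Finset.prod_congr rfl
    intro k hk
    rw [Finset.mem_range] at hk
    rw [show lam 0 - 1 - (lam 0 - 1 - k) = k by omega]
  have eB : (∏ j ∈ Finset.range (lam 0), (1 - q ^ j * t ^ (n + 1)))
      = qPoch (t ^ (n + 1)) q (lam 0) := by
    unfold qPoch
    exact Finset.prod_congr rfl fun k _ => by ring
  have e1 : (∏ j : Fin n, qPoch (t ^ ((j : ℕ) + 1)) q (lam 0 - lam j.succ))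
      = ∏ r ∈ Finset.range n, qPoch (t ^ (r + 1)) q (a (r + 1)) := by
    rw [← Fin.prod_univ_eq_prod_range (fun r => qPoch (t ^ (r + 1)) q (a (r + 1))) n]
    exact Finset.prod_congr rfl fun j _ => by rw [hsucc j]
  have e2 : (∏ j : Fin n, qPoch (t ^ ((j : ℕ) + 1 + 1)) q (lam 0 - lam j.succ))
      = ∏ r ∈ Finset.range n, qPoch (t ^ (r + 1 + 1)) q (a (r + 1)) := by
    rw [← Fin.prod_univ_eq_prod_range (fun r => qPoch (t ^ (r + 1 + 1)) q (a (r + 1))) n]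
    exact Finset.prod_congr rfl fun j _ => by rw [hsucc j]
  rw [eB, e1, e2]
  have lhs_eq : qPoch (t ^ (n + 1)) q (lam 0) *
      (∏ r ∈ Finset.range n, qPoch (t ^ (r + 1)) q (a (r + 1)))
      = ∏ r ∈ Finset.range (n + 1), qPoch (t ^ (r + 1)) q (a (r + 1)) := by
    rw [Finset.prod_range_succ, haN, mul_comm]
  have rhs_eq : (∏ r ∈ Finset.range (n + 1), qPoch (t ^ (r + 1)) q (a r))
      = ∏ r ∈ Finset.range n, qPoch (t ^ (r + 1 + 1)) q (a (r + 1)) := by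
    rw [Finset.prod_range_succ']
    have : qPoch (t ^ (0 + 1)) q (a 0) = 1 := by rw [ha0]; simp [qPoch]
    rw [this, mul_one]
  rw [lhs_eq, main, rhs_eq, mul_comm]

theorem thmC (n : ℕ) (lam : Fin n → ℕ) (hpart : Antitone lam) (q t : ℂ) :
    (∏ i : Fin n, ∏ j : Fin n,
        if i < j then qPoch (t ^ ((j : ℕ) - (i : ℕ))) q (lam i - lam j) else 1) *
      (∏ i : Fin n, ∏ j ∈ Finset.range (lam i), (1 - q ^ j * t ^ (n - (i : ℕ)))) =
    (∏ i : Fin n, ∏ j ∈ Finset.range (lam i),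
        (1 - q ^ (lam i - 1 - j) * t ^ (conjPart n lam j - (i : ℕ)))) *
      (∏ i : Fin n, ∏ j : Fin n,
        if i < j then qPoch (t ^ ((j : ℕ) - (i : ℕ) + 1)) q (lam i - lam j) else 1) := by
  induction n with
  | zero => simp
  | succ n ih =>
      set mu : Fin n → ℕ := fun i => lam i.succ with hmudef
      have hmu : Antitone mu := fun i j h => hpart (Fin.succ_le_succ_iff.mpr h)
      have hle0 : ∀ i : Fin n, lam i.succ ≤ lam 0 := fun i => hpart (Fin.zero_le _)
      rw [pairsplit n (fun i j => qPoch (t ^ ((j : ℕ) - (i : ℕ))) q (lam i - lam j)),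
        pairsplit n (fun i j => qPoch (t ^ ((j : ℕ) - (i : ℕ) + 1)) q (lam i - lam j)),
        Fin.prod_univ_succ
          (fun i : Fin (n+1) => ∏ j ∈ Finset.range (lam i), (1 - q ^ j * t ^ (n + 1 - (i : ℕ)))),
        Fin.prod_univ_succ
          (fun i : Fin (n+1) => ∏ j ∈ Finset.range (lam i),
            (1 - q ^ (lam i - 1 - j) * t ^ (conjPart (n+1) lam j - (i : ℕ))))]
      have eP0 : (∏ j : Fin n, qPoch (t ^ ((j.succ : ℕ) - ((0 : Fin (n+1)) : ℕ))) q
            (lam 0 - lam j.succ))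
          = ∏ j : Fin n, qPoch (t ^ ((j : ℕ) + 1)) q (lam 0 - lam j.succ) := by
        apply Finset.prod_congr rfl
        intro j _
        congr 2
      have eP0' : (∏ j : Fin n, qPoch (t ^ ((j.succ : ℕ) - ((0 : Fin (n+1)) : ℕ) + 1)) q
            (lam 0 - lam j.succ))
          = ∏ j : Fin n, qPoch (t ^ ((j : ℕ) + 1 + 1)) q (lam 0 - lam j.succ) := by
        apply Finset.prod_congr rfl
        intro j _
        congr 2
      have ePmu : (∏ i : Fin n, ∏ j : Fin n,
            if i < j then qPoch (t ^ ((j.succ : ℕ) - (i.succ : ℕ))) q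
              (lam i.succ - lam j.succ) else 1)
          = ∏ i : Fin n, ∏ j : Fin n,
              if i < j then qPoch (t ^ ((j : ℕ) - (i : ℕ))) q (mu i - mu j) else 1 := by
        apply Finset.prod_congr rfl; intro i _
        apply Finset.prod_congr rfl; intro j _
        simp [Nat.succ_sub_succ, hmudef]
      have ePmu' : (∏ i : Fin n, ∏ j : Fin n,
            if i < j then qPoch (t ^ ((j.succ : ℕ) - (i.succ : ℕ) + 1)) q
              (lam i.succ - lam j.succ) else 1)
          = ∏ i : Fin n, ∏ j : Fin n,
              if i < j then qPoch (t ^ ((j : ℕ) - (i : ℕ) + 1)) q (mu i - mu j) else 1 := by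
        apply Finset.prod_congr rfl; intro i _
        apply Finset.prod_congr rfl; intro j _
        simp [Nat.succ_sub_succ, hmudef]
      have eBmu : (∏ i : Fin n, ∏ j ∈ Finset.range (lam i.succ),
            (1 - q ^ j * t ^ (n + 1 - (i.succ : ℕ))))
          = ∏ i : Fin n, ∏ j ∈ Finset.range (mu i), (1 - q ^ j * t ^ (n - (i : ℕ))) := by
        apply Finset.prod_congr rfl; intro i _
        apply Finset.prod_congr rfl; intro j _
        simp [Nat.succ_sub_succ]
      have eNmu : (∏ i : Fin n, ∏ j ∈ Finset.range (lam i.succ),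
            (1 - q ^ (lam i.succ - 1 - j) * t ^ (conjPart (n+1) lam j - (i.succ : ℕ))))
          = ∏ i : Fin n, ∏ j ∈ Finset.range (mu i),
              (1 - q ^ (mu i - 1 - j) * t ^ (conjPart n mu j - (i : ℕ))) := by
        apply Finset.prod_congr rfl; intro i _
        apply Finset.prod_congr rfl; intro j hj
        rw [Finset.mem_range] at hj
        have hj0 : j < lam 0 := lt_of_lt_of_le hj (hle0 i)
        rw [conjPart_succ n lam j hj0]
        simp [Nat.succ_sub_succ, hmudef]
      rw [eP0, eP0', ePmu, ePmu', eBmu, eNmu]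
      have h1 := ih mu hmu
      have h2 := row_lemma n lam hpart q t
      have eN0 : (∏ j ∈ Finset.range (lam 0),
            (1 - q ^ (lam 0 - 1 - j) * t ^ (conjPart (n+1) lam j - ((0:Fin (n+1)) : ℕ))))
          = ∏ j ∈ Finset.range (lam 0),
              (1 - q ^ (lam 0 - 1 - j) * t ^ (conjPart (n+1) lam j)) := by
        simp
      have eB0 : (∏ j ∈ Finset.range (lam 0), (1 - q ^ j * t ^ (n + 1 - ((0:Fin (n+1)) : ℕ))))
          = ∏ j ∈ Finset.range (lam 0), (1 - q ^ j * t ^ (n + 1)) := by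
        simp
      rw [eN0, eB0]
      set P0 := ∏ j : Fin n, qPoch (t ^ ((j : ℕ) + 1)) q (lam 0 - lam j.succ)
      set P0' := ∏ j : Fin n, qPoch (t ^ ((j : ℕ) + 1 + 1)) q (lam 0 - lam j.succ)
      set Pm := ∏ i : Fin n, ∏ j : Fin n,
        if i < j then qPoch (t ^ ((j : ℕ) - (i : ℕ))) q (mu i - mu j) else 1
      set Pm' := ∏ i : Fin n, ∏ j : Fin n,
        if i < j then qPoch (t ^ ((j : ℕ) - (i : ℕ) + 1)) q (mu i - mu j) else 1
      set B0 := ∏ j ∈ Finset.range (lam 0), (1 - q ^ j * t ^ (n + 1))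
      set Bm := ∏ i : Fin n, ∏ j ∈ Finset.range (mu i), (1 - q ^ j * t ^ (n - (i : ℕ)))
      set N0 := ∏ j ∈ Finset.range (lam 0),
        (1 - q ^ (lam 0 - 1 - j) * t ^ (conjPart (n+1) lam j))
      set Nm := ∏ i : Fin n, ∏ j ∈ Finset.range (mu i),
        (1 - q ^ (mu i - 1 - j) * t ^ (conjPart n mu j - (i : ℕ)))
      linear_combination (B0 * P0) * h1 + (Nm * Pm') * h2

/-- `∏_{1≤i<j≤n} (t^{j-i}; q)_{λ_i-λ_j} / (t^{j-i+1}; q)_{λ_i-λ_j}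
 = ∏_{s∈λ} (1 - q^{a(s)} t^{l(s)+1}) / (1 - q^{a'(s)} t^{n-l'(s)})`.
Cells are `(i, j)` with 0-based coordinates; `a(s) = λ_i - 1 - j`,
`l(s)+1 = λ'_{j+1} - i`, `a'(s) = j`, `l'(s) = i`. -/
theorem double_product_arm_leg_two (n : ℕ) (lam : Fin n → ℕ) (hpart : Antitone lam)
    (q t : ℂ)
    (hden : ∀ (i : Fin n) (j : ℕ), j < lam i →
      1 - q ^ j * t ^ (n - (i : ℕ)) ≠ 0)
    (hden' : ∀ p : Fin n × Fin n, p.1 < p.2 →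
      qPoch (t ^ ((p.2 : ℕ) - (p.1 : ℕ) + 1)) q (lam p.1 - lam p.2) ≠ 0) :
    (∏ p ∈ Finset.univ.filter (fun p : Fin n × Fin n => p.1 < p.2),
        qPoch (t ^ ((p.2 : ℕ) - (p.1 : ℕ))) q (lam p.1 - lam p.2) /
          qPoch (t ^ ((p.2 : ℕ) - (p.1 : ℕ) + 1)) q (lam p.1 - lam p.2)) =
      ∏ i : Fin n, ∏ j ∈ Finset.range (lam i),
        (1 - q ^ (lam i - 1 - j) * t ^ (conjPart n lam j - (i : ℕ))) /
          (1 - q ^ j * t ^ (n - (i : ℕ))) := by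
  have hB : (∏ p ∈ Finset.univ.filter (fun p : Fin n × Fin n => p.1 < p.2),
      qPoch (t ^ ((p.2 : ℕ) - (p.1 : ℕ) + 1)) q (lam p.1 - lam p.2)) ≠ 0 := by
    rw [Finset.prod_ne_zero_iff]
    intro p hp
    exact hden' p (Finset.mem_filter.mp hp).2
  have hv : (∏ i : Fin n, ∏ j ∈ Finset.range (lam i),
      (1 - q ^ j * t ^ (n - (i : ℕ)))) ≠ 0 := by
    rw [Finset.prod_ne_zero_iff]
    intro i _
    rw [Finset.prod_ne_zero_iff]
    intro j hj
    exact hden i j (Finset.mem_range.mp hj)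
  simp only [Finset.prod_div_distrib]
  rw [div_eq_div_iff hB hv]
  rw [prod_filter_pairs n
      (fun p => qPoch (t ^ ((p.2 : ℕ) - (p.1 : ℕ))) q (lam p.1 - lam p.2)),
    prod_filter_pairs n
      (fun p => qPoch (t ^ ((p.2 : ℕ) - (p.1 : ℕ) + 1)) q (lam p.1 - lam p.2))]
  exact thmC n lam hpart q t

end
end
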